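/- Let (f_n)_{n∈ℕ} be a nonincreasing sequence of increasing functions f_n : (0,1) → (0,1) with lim_{x→0⁺} f_n(x) = 0 for all n, and suppose there exists x₀ ∈ (0,1) such that ∑_n f_n(x) converges for all x ∈ (0,x₀). Then every (f_n)-microscopic set has Lebesgue measure zero. -/

import Mathlib

open Set MeasureTheory

/-- `M` can be covered by a sequence of intervals whose `k`-th length is at most `len k`. -/
def IntervalCover (M : Set ℝ) (len : ℕ → ℝ) : Prop :=
  ∃ a b : ℕ → ℝ, M ⊆ ⋃ k, Set.Icc (a k) (b k) ∧ ∀ k, b k - a k ≤ len k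

def Microscopic (M : Set ℝ) : Prop :=
  ∀ ε : ℝ, 0 < ε → ε < 1 → IntervalCover M (fun k => ε ^ k)

def Nanoscopic (M : Set ℝ) : Prop :=
  ∀ ε : ℝ, 0 < ε → ε < 1 → IntervalCover M (fun k => ε ^ (2 ^ k))

def Picoscopic (M : Set ℝ) : Prop :=
  ∀ ε : ℝ, 0 < ε → ε < 1 → IntervalCover M (fun k => ε ^ (Nat.factorial (k + 1)))

def FnMicroscopic (f : ℕ → ℝ → ℝ) (M : Set ℝ) : Prop :=
  ∀ ε : ℝ, 0 < ε → ε < 1 → IntervalCover M (fun k => f k ε)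

/-- The standard conditions on a sequence of functions generating generalized microscopic sets. -/
def StandardConditions (f : ℕ → ℝ → ℝ) : Prop :=
  (∀ n, ∀ x ∈ Set.Ioo (0:ℝ) 1, f n x ∈ Set.Ioo (0:ℝ) 1) ∧
  (∀ n, StrictMonoOn (f n) (Set.Ioo (0:ℝ) 1)) ∧
  (∀ n, ∀ x ∈ Set.Ioo (0:ℝ) 1, f (n + 1) x ≤ f n x) ∧
  (∀ n, Filter.Tendsto (f n) (nhdsWithin 0 (Set.Ioi 0)) (nhds 0)) ∧
  (∃ x₀ : ℝ, 0 < x₀ ∧ ∀ x : ℝ, 0 < x → x < x₀ → Summable fun n => f n x)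

def StrongMeasureZero (B : Set ℝ) : Prop :=
  ∀ ε : ℕ → ℝ, (∀ k, 0 < ε k) → IntervalCover B ε

def IsFsigma (F : Set ℝ) : Prop :=
  ∃ C : ℕ → Set ℝ, (∀ n, IsClosed (C n)) ∧ F = ⋃ n, C n

/-- `A` can be covered by an `Fσ` set which is `(f n)`-microscopic. -/
def MicroStar (f : ℕ → ℝ → ℝ) (A : Set ℝ) : Prop :=
  ∃ F : Set ℝ, IsFsigma F ∧ FnMicroscopic f F ∧ A ⊆ F

/-- `m`-`(f n)`-microscopic sets. -/
def MFnMicroscopic (f : ℕ → ℝ → ℝ) (m : ℕ) (M : Set ℝ) : Prop :=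
  ∀ ε : ℝ, 0 < ε → ε < 1 → ∃ a b : ℕ → ℝ, M ⊆ ⋃ k, Set.Icc (a k) (b k) ∧
    ∀ k : ℕ, ∀ j < m, b (m * k + j) - a (m * k + j) ≤ f k ε

def TwoNanoscopic (M : Set ℝ) : Prop :=
  MFnMicroscopic (fun k ε => ε ^ (2 ^ k)) 2 M

set_option maxHeartbeats 1000000 in
theorem stmt3 (f : ℕ → ℝ → ℝ) (hf : StandardConditions f)
    (M : Set ℝ) (hM : FnMicroscopic f M) : volume M = 0 := by
  obtain ⟨hmem, hmono, hdec, htend, x₀, hx₀, hsum⟩ := hf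
  set x : ℝ := min x₀ 1 / 2 with hxdef
  have hx0 : 0 < x := by
    have := lt_min hx₀ (one_pos (α := ℝ)); rw [hxdef]; linarith
  have hx1 : x < 1 := by
    have : min x₀ 1 ≤ 1 := min_le_right _ _
    rw [hxdef]; linarith
  have hxx₀ : x < x₀ := by
    have : min x₀ 1 ≤ x₀ := min_le_left _ _
    rw [hxdef]; linarith
  have hSx : Summable (fun n => f n x) := hsum x hx0 hxx₀
  have key : ∀ δ : ℝ, 0 < δ → volume M ≤ ENNReal.ofReal δ := by
    intro δ hδ
    -- choose N with small tail at x
    have htail := tendsto_sum_nat_add (fun n => f n x)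
    have hev : ∀ᶠ N in Filter.atTop, (∑' n, f (n + N) x) < δ / 2 := by
      have : Iio (δ / 2) ∈ nhds (0 : ℝ) := Iio_mem_nhds (by linarith)
      exact htail.eventually_mem this
    obtain ⟨N, hN⟩ := hev.exists
    set c : ℝ := δ / (2 * (N + 1)) with hcdef
    have hc : 0 < c := by positivity
    -- choose ε
    have L : Filter.NeBot (nhdsWithin (0:ℝ) (Set.Ioi 0)) := by infer_instance
    have e1 : ∀ᶠ t in nhdsWithin (0:ℝ) (Set.Ioi 0), 0 < t :=
      eventually_mem_nhdsWithin
    have e2 : ∀ᶠ t in nhdsWithin (0:ℝ) (Set.Ioi 0), t < x :=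
      Filter.Eventually.filter_mono nhdsWithin_le_nhds (eventually_lt_nhds hx0)
    have e3 : ∀ᶠ t in nhdsWithin (0:ℝ) (Set.Ioi 0), ∀ n ∈ Finset.range N, f n t < c := by
      rw [Filter.eventually_all_finset]
      intro n _
      exact (htend n).eventually_mem (Iio_mem_nhds hc)
    obtain ⟨ε, ⟨hε0, hεx⟩, hεN⟩ := ((e1.and e2).and e3).exists
    have hε1 : ε < 1 := hεx.trans hx1
    have hSε : Summable (fun n => f n ε) := hsum ε hε0 (hεx.trans hxx₀)
    have hεIoo : ε ∈ Set.Ioo (0:ℝ) 1 := ⟨hε0, hε1⟩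
    have hxIoo : x ∈ Set.Ioo (0:ℝ) 1 := ⟨hx0, hx1⟩
    -- bound the total sum
    have hbound : (∑' n, f n ε) ≤ δ := by
      have hsplit := Summable.sum_add_tsum_nat_add N hSε
      have h1 : (∑ n ∈ Finset.range N, f n ε) ≤ N * c := by
        calc (∑ n ∈ Finset.range N, f n ε) ≤ ∑ n ∈ Finset.range N, c :=
              Finset.sum_le_sum fun n hn => (hεN n hn).le
          _ = N * c := by simp [mul_comm]
      have h2 : (∑' n, f (n + N) ε) ≤ ∑' n, f (n + N) x := by
        refine Summable.tsum_le_tsum (fun n => ?_) ((summable_nat_add_iff N).2 hSε)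
          ((summable_nat_add_iff N).2 hSx)
        exact (hmono (n + N) hεIoo hxIoo hεx).le
      have hNc : (N : ℝ) * c ≤ δ / 2 := by
        rw [hcdef]
        have hpos : (0:ℝ) < 2 * ((N:ℝ) + 1) := by positivity
        have heq : (N:ℝ) * (δ / (2 * ((N:ℝ) + 1))) = (N:ℝ) * δ / (2 * ((N:ℝ) + 1)) := by
          ring
        rw [heq, div_le_div_iff₀ hpos (by norm_num : (0:ℝ) < 2)]
        nlinarith [hδ.le, (Nat.cast_nonneg N : (0:ℝ) ≤ (N:ℝ))]
      linarith
    -- measure estimate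
    obtain ⟨a, b, hcov, hlen⟩ := hM ε hε0 hε1
    calc volume M ≤ volume (⋃ k, Set.Icc (a k) (b k)) := measure_mono hcov
      _ ≤ ∑' k, volume (Set.Icc (a k) (b k)) := measure_iUnion_le _
      _ = ∑' k, ENNReal.ofReal (b k - a k) := by simp [Real.volume_Icc]
      _ ≤ ∑' k, ENNReal.ofReal (f k ε) :=
          ENNReal.tsum_le_tsum fun k => ENNReal.ofReal_le_ofReal (hlen k)
      _ = ENNReal.ofReal (∑' k, f k ε) :=
          (ENNReal.ofReal_tsum_of_nonneg (fun k => (hmem k ε hεIoo).1.le) hSε).symm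
      _ ≤ ENNReal.ofReal δ := ENNReal.ofReal_le_ofReal hbound
  refine le_antisymm ?_ (zero_le)
  refine ENNReal.le_of_forall_pos_le_add fun r hr _ => ?_
  have := key r (by exact_mod_cast hr)
  simpa [ENNReal.ofReal_coe_nnreal] using this
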